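/- For all real numbers h, b and z, the Gaussian integral identity ∫_{−∞}^{h} φ(z)[1 − e^{−(b−z)(b−x)}] φ(x) dx = φ(z)Φ(h) − φ(b)Φ(h − b + z) holds. (With b = h_L this is the discrete-time corrected non-normalized density p_{h,L}^{(0,1)}(z) = ∫_{−∞}^{h} q_{h_L}^{(0,1)}(x→z) φ(x) dx.) -/
import Mathlib


open MeasureTheory Real

/-- The standard normal density. -/
noncomputable def phi (x : ℝ) : ℝ := (Real.sqrt (2 * Real.pi))⁻¹ * Real.exp (-x ^ 2 / 2)

/-- The standard normal cumulative distribution function. -/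
noncomputable def Phi (t : ℝ) : ℝ := ∫ x in Set.Iic t, phi x

lemma phi_integrable : Integrable phi := by
  have h := integrable_exp_neg_mul_sq (by norm_num : (0:ℝ) < 1/2)
  have h2 := h.const_mul (Real.sqrt (2 * Real.pi))⁻¹
  refine h2.congr ?_
  filter_upwards with x
  simp only [phi]
  congr 1
  ring

lemma shift_integral (f : ℝ → ℝ) (c h : ℝ) :
    ∫ x in Set.Iic h, f (x - c) = ∫ x in Set.Iic (h - c), f x := by
  rw [← integral_indicator measurableSet_Iic, ← integral_indicator measurableSet_Iic,
    ← integral_sub_right_eq_self (fun x => (Set.Iic (h - c)).indicator f x) c]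
  congr 1
  ext x
  by_cases hx : x ≤ h
  · simp [Set.indicator, hx, sub_le_sub_iff_right, Set.mem_Iic]
  · simp [Set.indicator, hx, sub_le_sub_iff_right, Set.mem_Iic]

/-- For all real `h, b, z`:
`∫_{−∞}^{h} φ(z)[1 − e^{−(b−z)(b−x)}] φ(x) dx = φ(z)Φ(h) − φ(b)Φ(h − b + z)`
(the discrete-time corrected non-normalized density `p_{h,L}^{(0,1)}(z)` with `b = h_L`). -/
theorem integral_corrected_transition_kernel (h b z : ℝ) :
    ∫ x in Set.Iic h, phi z * (1 - Real.exp (-(b - z) * (b - x))) * phi x =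
      phi z * Phi h - phi b * Phi (h - b + z) := by
  have key : ∀ x : ℝ, phi z * (1 - Real.exp (-(b - z) * (b - x))) * phi x =
      phi z * phi x - phi b * phi (x - (b - z)) := by
    intro x
    have e : Real.exp (-z ^ 2 / 2) * Real.exp (-(b - z) * (b - x)) * Real.exp (-x ^ 2 / 2)
        = Real.exp (-b ^ 2 / 2) * Real.exp (-(x - (b - z)) ^ 2 / 2) := by
      rw [← Real.exp_add, ← Real.exp_add, ← Real.exp_add]
      congr 1
      ring
    simp only [phi]
    linear_combination (-((Real.sqrt (2 * Real.pi))⁻¹)^2) * e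
  have i1 : IntegrableOn (fun x => phi z * phi x) (Set.Iic h) :=
    ((phi_integrable.const_mul (phi z)).integrableOn)
  have i2 : IntegrableOn (fun x => phi b * phi (x - (b - z))) (Set.Iic h) :=
    (((phi_integrable.comp_sub_right (b - z)).const_mul (phi b)).integrableOn)
  calc ∫ x in Set.Iic h, phi z * (1 - Real.exp (-(b - z) * (b - x))) * phi x
      = ∫ x in Set.Iic h, (phi z * phi x - phi b * phi (x - (b - z))) := by
        exact setIntegral_congr_fun measurableSet_Iic (fun x _ => key x)
    _ = (∫ x in Set.Iic h, phi z * phi x) - ∫ x in Set.Iic h, phi b * phi (x - (b - z)) :=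
        integral_sub i1 i2
    _ = phi z * Phi h - phi b * Phi (h - b + z) := by
        rw [integral_const_mul, integral_const_mul, shift_integral phi (b - z) h]
        have : h - (b - z) = h - b + z := by ring
        rw [this]
        rfl
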